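/- If n ≡ 2 (mod 8) and 3 ∤ n, then there is no (3,1)-sum-free arithmetic progression in Z_n of size (n+2)/4; the maximum size of such a progression is (n-2)/4. -/

import Mathlib

open Finset Pointwise

/-- The h-fold sumset of a finset. -/
def foldSum {G : Type*} [AddCommGroup G] [DecidableEq G] (A : Finset G) : ℕ → Finset G
  | 0 => {0}
  | n + 1 => A + foldSum A n

/-- The arithmetic progression {a, a+e, ..., a+c·e} in Z_m. -/
def apSet (m : ℕ) (a e : ZMod m) (c : ℕ) : Finset (ZMod m) :=
  (Finset.range (c + 1)).image (fun i => a + (i : ℕ) • e)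

/-- α_{3,1}(Z_n): the maximum size of a (3,1)-sum-free arithmetic progression in Z_n. -/
noncomputable def alpha31 (n : ℕ) : ℕ :=
  sSup {m : ℕ | ∃ (a e : ZMod n) (c : ℕ),
    Disjoint (foldSum (apSet n a e c) 3) (apSet n a e c) ∧ (apSet n a e c).card = m}

lemma mem_foldSum3 {G : Type*} [AddCommGroup G] [DecidableEq G] (A : Finset G) (x : G) :
    x ∈ foldSum A 3 ↔ ∃ p ∈ A, ∃ q ∈ A, ∃ r ∈ A, p + q + r = x := by
  simp only [foldSum, Finset.mem_add, Finset.mem_singleton]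
  constructor
  · rintro ⟨p, hp, y, ⟨q, hq, z, ⟨r, hr, w, rfl, rfl⟩, rfl⟩, rfl⟩
    exact ⟨p, hp, q, hq, r, hr, by abel⟩
  · rintro ⟨p, hp, q, hq, r, hr, rfl⟩
    exact ⟨p, hp, q + (r + 0), ⟨q, hq, r + 0, ⟨r, hr, 0, rfl, rfl⟩, rfl⟩, by abel⟩

lemma mem_apSet {m : ℕ} {a e : ZMod m} {c : ℕ} {x : ZMod m} :
    x ∈ apSet m a e c ↔ ∃ i ≤ c, a + (i : ℕ) • e = x := by
  simp [apSet, Nat.lt_succ_iff]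

lemma key_card_le (n k : ℕ) (hn : n = 8*k+2) (h3 : ¬ 3 ∣ n) (a e : ZMod n) (c : ℕ)
    (hdisj : Disjoint (foldSum (apSet n a e c) 3) (apSet n a e c)) :
    (apSet n a e c).card ≤ 2*k := by
  by_contra hcard
  push_neg at hcard
  haveI : NeZero n := ⟨by omega⟩
  set u := e.val with hu
  set v := a.val with hv
  have he : (u : ZMod n) = e := ZMod.natCast_rightInverse e
  have ha : (v : ZMod n) = a := ZMod.natCast_rightInverse a
  have hform : ∀ i : ℕ, a + (i : ℕ) • e = ((v + i*u : ℕ) : ZMod n) := by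
    intro i
    rw [← he, ← ha]
    push_cast
    rw [nsmul_eq_mul]
  have hc : 2*k ≤ c := by
    have h1 : (apSet n a e c).card ≤ c + 1 :=
      le_trans (Finset.card_image_le) (by simp)
    omega
  rcases Nat.eq_zero_or_pos k with hk0 | hk
  · subst hk0
    subst hn
    have h2 : (2 : ZMod (8*0+2)) = 0 := by decide
    have hmem : a ∈ apSet _ a e c := mem_apSet.mpr ⟨0, by omega, by simp⟩
    have hmem3 : a ∈ foldSum (apSet _ a e c) 3 := by
      refine (mem_foldSum3 _ _).mpr ⟨a, hmem, a, hmem, a, hmem, ?_⟩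
      have h4 : a + a + a = 2 * a + a := by ring
      rw [h4, h2]; ring
    exact Finset.disjoint_left.mp hdisj hmem3 hmem
  have hmemA : ∀ j : ℕ, j ≤ c → ((v + j*u : ℕ) : ZMod n) ∈ apSet n a e c := by
    intro j hj
    exact mem_apSet.mpr ⟨j, hj, hform j⟩
  have hmem3 : ∀ i : ℕ, i ≤ 3*c → ((3*v + i*u : ℕ) : ZMod n) ∈ foldSum (apSet n a e c) 3 := by
    intro i hi
    obtain ⟨i₁, i₂, i₃, h1, h2, h3', hsum⟩ : ∃ i₁ i₂ i₃, i₁ ≤ c ∧ i₂ ≤ c ∧ i₃ ≤ c ∧ i₁+i₂+i₃ = i :=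
      ⟨min i c, min (i - min i c) c, i - min i c - min (i - min i c) c, by omega, by omega, by omega, by omega⟩
    refine (mem_foldSum3 _ _).mpr ⟨_, hmemA i₁ h1, _, hmemA i₂ h2, _, hmemA i₃ h3', ?_⟩
    rw [← hsum]
    push_cast
    ring
  have H : ∀ i : ℕ, i ≤ 3*c → ∀ j : ℕ, j ≤ c → ¬ (3*v + i*u ≡ v + j*u [MOD n]) := by
    intro i hi j hj hmod
    have hcast : ((3*v + i*u : ℕ) : ZMod n) = ((v + j*u : ℕ) : ZMod n) :=
      (ZMod.natCast_eq_natCast_iff _ _ _).mpr hmod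
    exact Finset.disjoint_left.mp hdisj (hmem3 i hi) (hcast ▸ hmemA j hj)
  have hperiod : ∀ s : ℕ, 0 < s → s ≤ 2*k → ¬ (n ∣ s * u) := by
    intro s hs hsk hdvd
    have hsub : apSet n a e c ⊆ (Finset.range s).image (fun i => a + (i : ℕ) • e) := by
      intro x hx
      obtain ⟨i, hi, rfl⟩ := mem_apSet.mp hx
      refine Finset.mem_image.mpr ⟨i % s, Finset.mem_range.mpr (Nat.mod_lt _ hs), ?_⟩
      rw [hform, hform]
      refine ((ZMod.natCast_eq_natCast_iff _ _ _).mpr ?_)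
      have h1 : i % s * u ≡ i * u [MOD s * u] := Nat.ModEq.mul_right' u (Nat.mod_modEq i s)
      exact Nat.ModEq.add_left v (h1.of_dvd hdvd)
    have hle : (apSet n a e c).card ≤ s :=
      le_trans (Finset.card_le_card hsub) (le_trans Finset.card_image_le (by simp))
    omega
  set d := addOrderOf e with hd
  have hd0 : 0 < d := addOrderOf_pos e
  have hde : d • e = 0 := addOrderOf_nsmul_eq_zero e
  have hdu : n ∣ d * u := by
    have h0 : ((d * u : ℕ) : ZMod n) = 0 := by
      push_cast
      rw [he, ← nsmul_eq_mul]
      exact hde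
    exact (ZMod.natCast_eq_zero_iff _ _).mp h0
  have hdn : d ∣ n := by
    refine addOrderOf_dvd_of_nsmul_eq_zero ?_
    rw [nsmul_eq_mul, ZMod.natCast_self, zero_mul]
  have hd3 : 2*k+1 ≤ d := by
    by_contra h
    exact hperiod d hd0 (by omega) hdu
  have hmin : ∀ s : ℕ, 0 < s → n ∣ s * u → d ∣ s := by
    intro s hs hdvd
    refine addOrderOf_dvd_of_nsmul_eq_zero ?_
    have h0 : ((s * u : ℕ) : ZMod n) = 0 := (ZMod.natCast_eq_zero_iff _ _).mpr hdvd
    push_cast at h0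
    rw [he, ← nsmul_eq_mul] at h0
    exact h0
  have hcases : d = 4*k+1 ∨ d = n := by
    obtain ⟨q, hq⟩ := hdn
    have hq4 : q ≤ 3 := by nlinarith
    interval_cases q
    · omega
    · right; omega
    · left; omega
    · exact absurd ⟨d, by omega⟩ h3
  obtain hD | hD := hcases
  · -- d = 4k+1 : u even, u = 2u', u' invertible mod d
    obtain ⟨u', hu'⟩ : 2 ∣ u := by
      obtain ⟨w, hw⟩ := hdu
      refine ⟨w, ?_⟩
      have h2d : d * u = d * (2*w) := by rw [hw, hn, hD]; ring
      exact Nat.eq_of_mul_eq_mul_left hd0 h2d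
    have hcop : Nat.Coprime u' d := by
      by_contra hg
      have hgpos : 0 < Nat.gcd u' d := Nat.gcd_pos_of_pos_right u' hd0
      have hg2 : 2 ≤ Nat.gcd u' d := by
        rw [Nat.Coprime] at hg; omega
      obtain ⟨u₃, hu₃⟩ := Nat.gcd_dvd_left u' d
      obtain ⟨d₂, hd₂⟩ := Nat.gcd_dvd_right u' d
      have hd₂pos : 0 < d₂ := by
        rcases Nat.eq_zero_or_pos d₂ with h | h
        · rw [h, Nat.mul_zero] at hd₂; omega
        · exact h
      have hdvd : n ∣ d₂ * u := by
        refine ⟨u₃, ?_⟩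
        calc d₂ * u = d₂ * (2 * (Nat.gcd u' d * u₃)) := by rw [← hu₃, ← hu']
          _ = 2 * (Nat.gcd u' d * d₂) * u₃ := by ring
          _ = 2 * d * u₃ := by rw [← hd₂]
          _ = n * u₃ := by rw [hn, hD]; ring
      have hdd := hmin d₂ hd₂pos hdvd
      have hled := Nat.le_of_dvd hd₂pos hdd
      nlinarith [hd₂, hg2, hd₂pos, hled]
    obtain ⟨b, -, hb⟩ := Nat.exists_mul_mod_eq_one_of_coprime hcop (by omega)
    set t := b * v with htdef
    have h1 : u' * b ≡ 1 [MOD d] := by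
      rw [Nat.ModEq, hb, Nat.mod_eq_of_lt (by omega)]
    have htd : t * u' ≡ v [MOD d] := by
      have h2 : (u' * b) * v ≡ 1 * v [MOD d] := h1.mul_right v
      have h3' : t * u' = (u' * b) * v := by rw [htdef]; ring
      rw [h3', ]
      simpa using h2
    have ht : t * u ≡ 2 * v [MOD n] := by
      have h4 : 2 * (t * u') ≡ 2 * v [MOD 2 * d] := htd.mul_left' 2
      have h5 : t * u = 2 * (t * u') := by rw [hu']; ring
      have h6 : 2 * d = n := by omega
      rw [h6] at h4
      rw [h5]
      exact h4
    set i := d * (t / d) + d - t with hidef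
    have hi3 : i ≤ 3*c := by
      have := Nat.div_add_mod t d
      have := Nat.mod_lt t hd0
      omega
    refine H i hi3 0 (Nat.zero_le c) ?_
    have hti : t + i = d * (t / d) + d := by
      have := Nat.div_add_mod t d
      have := Nat.mod_lt t hd0
      omega
    have h8 : 2*v + i*u ≡ 0 [MOD n] := by
      have h9 : 2*v + i*u ≡ t*u + i*u [MOD n] := Nat.ModEq.add_right _ ht.symm
      refine h9.trans ?_
      have h10 : t*u + i*u = (d*u)*(t/d+1) := by rw [← Nat.add_mul, hti]; ring
      rw [h10]
      exact Nat.modEq_zero_iff_dvd.mpr (Dvd.dvd.mul_right hdu _)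
    have e1 : 3*v + i*u = v + (2*v + i*u) := by ring
    have e2 : v + 0*u = v + 0 := by ring
    rw [e1, e2]
    exact Nat.ModEq.add_left v h8
  · -- d = n : u invertible mod n
    have hcop : Nat.Coprime u n := by
      by_contra hg
      have hgpos : 0 < Nat.gcd u n := Nat.gcd_pos_of_pos_right u (by omega)
      have hg2 : 2 ≤ Nat.gcd u n := by omega
      obtain ⟨u₂, hu₂⟩ := Nat.gcd_dvd_left u n
      obtain ⟨n₂, hn₂⟩ := Nat.gcd_dvd_right u n
      have hn₂pos : 0 < n₂ := by
        rcases Nat.eq_zero_or_pos n₂ with h | h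
        · rw [h, Nat.mul_zero] at hn₂; omega
        · exact h
      have hdvd : n ∣ n₂ * u := by
        refine ⟨u₂, ?_⟩
        calc n₂ * u = n₂ * (Nat.gcd u n * u₂) := by rw [← hu₂]
          _ = Nat.gcd u n * n₂ * u₂ := by ring
          _ = n * u₂ := by rw [← hn₂]
      have hdd := hmin n₂ hn₂pos hdvd
      rw [hD] at hdd
      have hle := Nat.le_of_dvd hn₂pos hdd
      nlinarith [hn₂, hg2, hn₂pos, hle]
    obtain ⟨b, -, hb⟩ := Nat.exists_mul_mod_eq_one_of_coprime hcop (by omega)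
    set t := (b * (2*v)) % n with htdef
    have h1 : u * b ≡ 1 [MOD n] := by
      rw [Nat.ModEq, hb, Nat.mod_eq_of_lt (by omega)]
    have ht : t * u ≡ 2 * v [MOD n] := by
      have h2 : (u * b) * (2*v) ≡ 1 * (2*v) [MOD n] := h1.mul_right _
      have h3' : t ≡ b * (2*v) [MOD n] := Nat.mod_modEq _ _
      have h4 := h3'.mul_right u
      refine h4.trans ?_
      have h5 : b * (2*v) * u = (u*b) * (2*v) := by ring
      rw [h5]
      simpa using h2
    have htlt : t < n := Nat.mod_lt _ (by omega)
    rcases lt_trichotomy t (2*k+1) with hts | hts | hts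
    · refine H 0 (by omega) t (by omega) ?_
      have e1 : 3*v + 0*u = v + 2*v := by ring
      rw [e1]
      exact Nat.ModEq.add_left v ht.symm
    · -- t = 2k+1 : parity contradiction
      have h2 : t * u ≡ 2*v [MOD 2] := ht.of_dvd ⟨4*k+1, by omega⟩
      have hdvd2 : 2 ∣ t * u :=
        Nat.modEq_zero_iff_dvd.mp (h2.trans (Nat.modEq_zero_iff_dvd.mpr ⟨v, rfl⟩))
      have hu2 : 2 ∣ u := by
        rcases (Nat.Prime.dvd_mul Nat.prime_two).mp hdvd2 with h | h
        · omega
        · exact h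
      have hfin : (2:ℕ) ∣ 1 := by
        rw [← hcop]
        exact Nat.dvd_gcd hu2 ⟨4*k+1, by omega⟩
      norm_num at hfin
    · refine H (n - t) (by omega) 0 (Nat.zero_le c) ?_
      have h8 : 2*v + (n-t)*u ≡ 0 [MOD n] := by
        have h9 : 2*v + (n-t)*u ≡ t*u + (n-t)*u [MOD n] := Nat.ModEq.add_right _ ht.symm
        refine h9.trans ?_
        have h10 : t*u + (n-t)*u = n*u := by rw [← Nat.add_mul]; congr 1; omega
        rw [h10]
        exact Nat.modEq_zero_iff_dvd.mpr ⟨u, rfl⟩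
      have e1 : 3*v + (n-t)*u = v + (2*v + (n-t)*u) := by ring
      have e2 : v + 0*u = v + 0 := by ring
      rw [e1, e2]
      exact Nat.ModEq.add_left v h8

lemma construct31 (n k : ℕ) (hn : n = 8*k+2) (hk : 1 ≤ k) :
    Disjoint (foldSum (apSet n ((k:ℕ) : ZMod n) 1 (2*k-1)) 3) (apSet n ((k:ℕ) : ZMod n) 1 (2*k-1)) ∧
    (apSet n ((k:ℕ) : ZMod n) 1 (2*k-1)).card = 2*k := by
  have hform : ∀ i : ℕ, ((k:ℕ) : ZMod n) + (i:ℕ) • (1 : ZMod n) = ((k + i : ℕ) : ZMod n) := by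
    intro i
    push_cast
    rw [nsmul_eq_mul, mul_one]
  constructor
  · rw [Finset.disjoint_left]
    intro x hx hx'
    obtain ⟨p, hp, q, hq, r, hr, rfl⟩ := (mem_foldSum3 _ _).mp hx
    obtain ⟨i₁, hi₁, rfl⟩ := mem_apSet.mp hp
    obtain ⟨i₂, hi₂, rfl⟩ := mem_apSet.mp hq
    obtain ⟨i₃, hi₃, rfl⟩ := mem_apSet.mp hr
    obtain ⟨j, hj, hx⟩ := mem_apSet.mp hx'
    rw [hform j] at hx
    have hsum : (((k:ℕ):ZMod n) + (i₁:ℕ) • (1:ZMod n)) + (((k:ℕ):ZMod n) + (i₂:ℕ) • (1:ZMod n))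
        + (((k:ℕ):ZMod n) + (i₃:ℕ) • (1:ZMod n)) = ((3*k + (i₁+i₂+i₃) : ℕ) : ZMod n) := by
      rw [hform i₁, hform i₂, hform i₃]
      push_cast
      ring
    have heq := (ZMod.natCast_eq_natCast_iff _ _ _).mp (hx.trans hsum)
    have hlt := Int.le_of_dvd (by push_cast; omega) heq.dvd
    push_cast at hlt
    omega
  · rw [apSet, Finset.card_image_of_injOn]
    · rw [Finset.card_range]; omega
    · intro i hi i' hi' hii
      simp only [Finset.coe_range, Set.mem_Iio] at hi hi'
      have hii' : ((k:ℕ):ZMod n) + (i:ℕ) • (1:ZMod n) = ((k:ℕ):ZMod n) + (i':ℕ) • (1:ZMod n) := hii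
      rw [hform i, hform i'] at hii'
      have heq := (ZMod.natCast_eq_natCast_iff _ _ _).mp hii'
      rw [Nat.ModEq, Nat.mod_eq_of_lt (by omega), Nat.mod_eq_of_lt (by omega)] at heq
      omega

/-- For n ≡ 2 (mod 8) with 3 ∤ n, no (3,1)-sum-free arithmetic progression in Z_n
has size (n+2)/4, and the maximum size of such a progression is (n-2)/4. -/
theorem stmt15 (n : ℕ) (h8 : n % 8 = 2) (h3 : ¬ 3 ∣ n) :
    (∀ (a e : ZMod n) (c : ℕ),
      Disjoint (foldSum (apSet n a e c) 3) (apSet n a e c) →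
      (apSet n a e c).card ≠ (n + 2) / 4) ∧
    alpha31 n = (n - 2) / 4 := by
  have hn : n = 8*(n/8) + 2 := by omega
  set k := n / 8 with hkdef
  have key : ∀ (a e : ZMod n) (c : ℕ),
      Disjoint (foldSum (apSet n a e c) 3) (apSet n a e c) →
      (apSet n a e c).card ≤ 2*k := fun a e c hd => key_card_le n k hn h3 a e c hd
  constructor
  · intro a e c hd hcardeq
    have h1 := key a e c hd
    have h2 : (n+2)/4 = 2*k+1 := by omega
    omega
  · rw [alpha31]
    have h24 : (n-2)/4 = 2*k := by omega
    rw [h24]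
    rcases Nat.eq_zero_or_pos k with hk0 | hkpos
    · have hempty : {m : ℕ | ∃ (a e : ZMod n) (c : ℕ),
          Disjoint (foldSum (apSet n a e c) 3) (apSet n a e c) ∧ (apSet n a e c).card = m} = ∅ := by
        ext m
        simp only [Set.mem_setOf_eq, Set.mem_empty_iff_false, iff_false]
        rintro ⟨a, e, c, hd, rfl⟩
        have h1 := key a e c hd
        have h2 : 0 < (apSet n a e c).card :=
          Finset.card_pos.mpr ⟨a, mem_apSet.mpr ⟨0, by omega, by simp⟩⟩
        omega
      rw [hempty, csSup_empty]
      simp [hk0]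
    · obtain ⟨hd, hcard⟩ := construct31 n k hn hkpos
      have hmem : 2*k ∈ {m : ℕ | ∃ (a e : ZMod n) (c : ℕ),
          Disjoint (foldSum (apSet n a e c) 3) (apSet n a e c) ∧ (apSet n a e c).card = m} :=
        ⟨((k:ℕ) : ZMod n), 1, 2*k-1, hd, hcard⟩
      have hbdd : ∀ m ∈ {m : ℕ | ∃ (a e : ZMod n) (c : ℕ),
          Disjoint (foldSum (apSet n a e c) 3) (apSet n a e c) ∧ (apSet n a e c).card = m},
          m ≤ 2*k := by
        rintro m ⟨a, e, c, hdd, rfl⟩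
        exact key a e c hdd
      exact le_antisymm (csSup_le ⟨2*k, hmem⟩ hbdd) (le_csSup ⟨2*k, hbdd⟩ hmem)
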